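/- Let (λₙ) be a sequence of nonnegative finitely additive set functions on 𝒫(ℕ) such that λₙ(ℕ) ≤ 1 for every n and limₙ λₙ({k : k ≥ n}) = 0. Then for each ε > 0 there exists a strictly increasing sequence of positive integers p₀ < p₁ < p₂ < … such that for every infinite set U ⊆ ℕ, liminf_{n→∞} λₙ(⋃_{j ∈ ℕ∖U} {k : p_{j-1} ≤ k < p_j}) ≤ ε. -/

import Mathlib

open Filter

/-- Lemma 5 (Kalenda-type): for nonnegative finitely additive set functions λₙ on 𝒫(ℕ)
with λₙ(ℕ) ≤ 1 and λₙ({k : k ≥ n}) → 0, for each ε > 0 there is a strictly increasing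
sequence (pⱼ) of positive integers such that for every infinite U ⊆ ℕ the liminf of
λₙ of the union of blocks [pⱼ, p_{j+1}) with j ∉ U is at most ε. -/
theorem stmt4 (lam : ℕ → Set ℕ → ℝ)
    (h_nonneg : ∀ n A, 0 ≤ lam n A)
    (h_add : ∀ n (A B : Set ℕ), Disjoint A B → lam n (A ∪ B) = lam n A + lam n B)
    (h_bound : ∀ n, lam n Set.univ ≤ 1)
    (h_lim : Tendsto (fun n => lam n {k | n ≤ k}) atTop (nhds 0))
    (ε : ℝ) (hε : 0 < ε) :
    ∃ p : ℕ → ℕ, StrictMono p ∧ 0 < p 0 ∧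
      ∀ U : Set ℕ, U.Infinite →
        liminf (fun n => lam n (⋃ j ∈ Uᶜ, Set.Ico (p j) (p (j + 1)))) atTop ≤ ε := by
  have h_empty : ∀ n, lam n (∅ : Set ℕ) = 0 := by
    intro n
    have := h_add n ∅ ∅ (disjoint_bot_left)
    simp at this
    linarith
  have h_mono : ∀ n (A B : Set ℕ), A ⊆ B → lam n A ≤ lam n B := by
    intro n A B hAB
    have h1 : A ∪ (B \ A) = B := Set.union_diff_cancel hAB
    have h2 := h_add n A (B \ A) Set.disjoint_sdiff_right
    rw [h1] at h2
    have := h_nonneg n (B \ A)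
    linarith
  have h_sub : ∀ n (A B : Set ℕ), lam n (A ∪ B) ≤ lam n A + lam n B := by
    intro n A B
    have h1 : A ∪ B = A ∪ (B \ A) := by rw [Set.union_diff_self]
    rw [h1, h_add n A (B \ A) Set.disjoint_sdiff_right]
    have := h_mono n (B \ A) B Set.diff_subset
    linarith
  -- key claim
  have hP : ∃ q : ℕ, ∀ m : ℕ, {n | lam n (Set.Ico q m) ≤ ε/2}.Infinite := by
    by_contra hcon
    push_neg at hcon
    choose g hg using hcon
    have hglt : ∀ a, a < g a := by
      intro a
      by_contra h
      push_neg at h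
      apply (hg a).not_infinite
      have he : Set.Ico a (g a) = (∅ : Set ℕ) := Set.Ico_eq_empty (by omega)
      have : {n | lam n (Set.Ico a (g a)) ≤ ε/2} = Set.univ := by
        ext n; simp [he, h_empty n, le_of_lt (half_pos hε)]
      rw [this]; exact Set.infinite_univ
    set Q : ℕ → ℕ := fun i => g^[i] 0 with hQ
    have hQs : ∀ i, Q i < Q (i+1) := by
      intro i
      have : Q (i+1) = g (Q i) := Function.iterate_succ_apply' g i 0
      rw [this]; exact hglt _
    have hQmono : Monotone Q := monotone_nat_of_le_succ fun i => (hQs i).le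
    -- bounds on the finite good sets
    have hfin : ∀ i : ℕ, ∃ N, ∀ n > N, ε/2 < lam n (Set.Ico (Q i) (Q (i+1))) := by
      intro i
      have h1 : Q (i+1) = g (Q i) := Function.iterate_succ_apply' g i 0
      have h2 := hg (Q i)
      obtain ⟨N, hN⟩ := h2.bddAbove
      refine ⟨N, fun n hn => ?_⟩
      rw [h1]
      by_contra hle
      push_neg at hle
      exact absurd (hN hle) (by omega)
    choose N hN using hfin
    obtain ⟨K, hK⟩ := exists_nat_gt (2/ε)
    have hK1 : (1:ℝ) < K * (ε/2) := by
      have h1 : (2/ε) * (ε/2) = 1 := by field_simp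
      nlinarith [div_nonneg (by norm_num : (0:ℝ) ≤ 2) hε.le]
    have hsum : ∀ (n K : ℕ), (Finset.range K).sum (fun i => lam n (Set.Ico (Q i) (Q (i+1)))) =
        lam n (Set.Ico (Q 0) (Q K)) := by
      intro n K
      induction K with
      | zero => simp [Set.Ico_eq_empty (lt_irrefl _), h_empty]
      | succ K ih =>
        rw [Finset.sum_range_succ, ih,
          ← h_add n _ _ (Set.Ico_disjoint_Ico_same),
          Set.Ico_union_Ico_eq_Ico (hQmono (Nat.zero_le K)) (hQs K).le]
    set n := (Finset.range K).sup N + 1 with hn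
    have hbig : ∀ i ∈ Finset.range K, ε/2 < lam n (Set.Ico (Q i) (Q (i+1))) := by
      intro i hi
      apply hN i
      have : N i ≤ (Finset.range K).sup N := Finset.le_sup hi
      omega
    have h1 : (K : ℝ) * (ε/2) < lam n (Set.Ico (Q 0) (Q K)) := by
      rw [← hsum n K]
      calc (K:ℝ) * (ε/2) = (Finset.range K).sum (fun _ => ε/2) := by
            rw [Finset.sum_const, Finset.card_range, nsmul_eq_mul]
        _ < _ := by
            apply Finset.sum_lt_sum_of_nonempty
            · exact Finset.nonempty_range_iff.mpr (by
                rintro rfl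
                norm_num at hK1)
            · exact hbig
    have h2 := h_mono n (Set.Ico (Q 0) (Q K)) Set.univ (Set.subset_univ _)
    have h3 := h_bound n
    linarith
  obtain ⟨q, hq⟩ := hP
  -- n₀ from h_lim
  have hlim' : ∀ᶠ n in atTop, lam n {k | n ≤ k} < ε/2 := by
    have := h_lim.eventually (gt_mem_nhds (half_pos hε))
    exact this
  obtain ⟨n₀, hn₀⟩ := eventually_atTop.mp hlim'
  -- recursive choice
  have hf : ∀ m : ℕ, ∃ n, lam n (Set.Ico q m) ≤ ε/2 ∧ max n₀ m < n := by
    intro m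
    obtain ⟨b, hb1, hb2⟩ := (hq m).exists_gt (max n₀ m)
    exact ⟨b, hb1, hb2⟩
  choose f hf1 hf2 using hf
  set p : ℕ → ℕ := fun j => Nat.rec (max q 1) (fun _ pj => f pj) j with hp
  have hpsucc : ∀ j, p (j+1) = f (p j) := fun j => rfl
  have hpmono : StrictMono p := by
    apply strictMono_nat_of_lt_succ
    intro j
    rw [hpsucc j]
    exact lt_of_le_of_lt (le_max_right n₀ (p j)) (hf2 (p j))
  refine ⟨p, hpmono, ?_, ?_⟩
  · have : p 0 = max q 1 := rfl
    omega
  · intro U hU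
    set E := ⋃ j ∈ Uᶜ, Set.Ico (p j) (p (j + 1)) with hE
    apply liminf_le_of_frequently_le
    · rw [frequently_atTop]
      intro M
      obtain ⟨j, hjU, hjM⟩ := hU.exists_gt M
      refine ⟨p (j+1), ?_, ?_⟩
      · have : j + 1 ≤ p (j+1) := hpmono.le_apply
        omega
      · -- key estimate
        have hmf : p (j+1) = f (p j) := hpsucc j
        have hsubset : E ⊆ Set.Ico q (p j) ∪ {k | p (j+1) ≤ k} := by
          intro x hx
          simp only [hE, Set.mem_iUnion, Set.mem_compl_iff, exists_prop] at hx
          obtain ⟨i, hiU, hx1, hx2⟩ := hx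
          have hij : i ≠ j := fun h => hiU (h ▸ hjU)
          rcases lt_or_gt_of_ne hij with h | h
          · left
            constructor
            · have : q ≤ p 0 := le_max_left q 1
              exact le_trans (le_trans this (hpmono.monotone (Nat.zero_le i))) hx1
            · exact lt_of_lt_of_le hx2 (hpmono.monotone (show i + 1 ≤ j by omega))
          · right
            have : p (j+1) ≤ p i := hpmono.monotone (show j + 1 ≤ i by omega)
            simp only [Set.mem_setOf_eq]
            omega
        calc lam (p (j+1)) E ≤ lam (p (j+1)) (Set.Ico q (p j) ∪ {k | p (j+1) ≤ k}) :=
              h_mono _ _ _ hsubset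
          _ ≤ lam (p (j+1)) (Set.Ico q (p j)) + lam (p (j+1)) {k | p (j+1) ≤ k} := h_sub _ _ _
          _ ≤ ε/2 + ε/2 := by
              apply add_le_add
              · rw [hmf]; exact hf1 (p j)
              · apply le_of_lt
                apply hn₀
                rw [hmf]
                have := hf2 (p j)
                omega
          _ = ε := by ring
    · exact isBoundedUnder_of ⟨0, fun n => h_nonneg n E⟩
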